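/- If T is an irreducible n×n matrix with nonnegative off-diagonal entries such that every column sum of T is ≤ 0 and at least one column sum is strictly negative, then every eigenvalue of T has strictly negative real part; in particular T is invertible. -/

import Mathlib

open Matrix

/-- A matrix is irreducible if there is no nontrivial subset `S` of indices with
`A i j = 0` for all `i ∈ S`, `j ∉ S`. -/
def MatIrreducible {n : ℕ} (A : Matrix (Fin n) (Fin n) ℝ) : Prop :=
  ¬ ∃ S : Set (Fin n), S.Nonempty ∧ Sᶜ.Nonempty ∧ ∀ i ∈ S, ∀ j ∉ S, A i j = 0

/-- From spectrum membership, extract a left eigenvector (eigenvector of the transpose). -/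
lemma aux_left_eigvec (n : ℕ) (M : Matrix (Fin n) (Fin n) ℂ) (μ : ℂ) (h : μ ∈ spectrum ℂ M) :
    ∃ x : Fin n → ℂ, x ≠ 0 ∧ ∀ j, ∑ i, M i j * x i = μ * x j := by
  rw [spectrum.mem_iff] at h
  have hdet : (μ • (1 : Matrix (Fin n) (Fin n) ℂ) - M).det = 0 := by
    by_contra hd
    exact h (by
      rw [Matrix.isUnit_iff_isUnit_det]
      simpa [Algebra.algebraMap_eq_smul_one] using isUnit_iff_ne_zero.mpr hd)
  have hdetT : ((μ • (1 : Matrix (Fin n) (Fin n) ℂ)) - Mᵀ).det = 0 := by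
    have : ((μ • (1 : Matrix (Fin n) (Fin n) ℂ)) - M)ᵀ = μ • (1 : Matrix (Fin n) (Fin n) ℂ) - Mᵀ := by
      rw [Matrix.transpose_sub, Matrix.transpose_smul, Matrix.transpose_one]
    rw [← this, Matrix.det_transpose]
    exact hdet
  obtain ⟨v, hv, hmv⟩ := (Matrix.exists_mulVec_eq_zero_iff).mpr hdetT
  refine ⟨v, hv, fun j => ?_⟩
  have := congrFun hmv j
  rw [Matrix.sub_mulVec] at this
  simp only [Pi.sub_apply, Pi.zero_apply, sub_eq_zero] at this
  have h1 : (Mᵀ.mulVec v) j = ∑ i, M i j * v i := by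
    simp [Matrix.mulVec, dotProduct, Matrix.transpose_apply]
  have h2 : ((μ • (1 : Matrix (Fin n) (Fin n) ℂ)).mulVec v) j = μ * v j := by
    simp [Matrix.smul_mulVec, Matrix.one_mulVec]
  rw [h1] at this
  rw [h2] at this
  exact this.symm

/-- The core Perron–Frobenius / Gershgorin argument : no left eigenvector with
eigenvalue of nonnegative real part can exist. -/
lemma aux_no_eig (n : ℕ) (hn : 0 < n)
    (T : Matrix (Fin n) (Fin n) ℝ)
    (hoff : ∀ i j, i ≠ j → 0 ≤ T i j)
    (hcol : ∀ j, ∑ i, T i j ≤ 0)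
    (hirr : MatIrreducible T)
    (hleak : ∃ j, ∑ i, T i j < 0)
    (μ : ℂ) (hre : 0 ≤ μ.re)
    (x : Fin n → ℂ) (hx : x ≠ 0)
    (heig : ∀ j, ∑ i, (T i j : ℂ) * x i = μ * x j) : False := by
  have hne : (Finset.univ : Finset (Fin n)).Nonempty := ⟨⟨0, hn⟩, Finset.mem_univ _⟩
  set a : Fin n → ℝ := fun i => ‖x i‖ with ha
  obtain ⟨j₀, -, hj₀max⟩ := Finset.univ.exists_max_image a hne
  set m : ℝ := a j₀ with hm
  have hmpos : 0 < m := by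
    obtain ⟨k, hk⟩ := Function.ne_iff.mp hx
    have : 0 < a k := by simpa [ha] using (norm_pos_iff.mpr hk)
    exact lt_of_lt_of_le this (hj₀max k (Finset.mem_univ k))
  have hanonneg : ∀ i, 0 ≤ a i := fun i => norm_nonneg _
  have hsum1 : ∀ j, ∑ i ∈ Finset.univ.erase j, (T i j : ℂ) * x i = (μ - (T j j : ℂ)) * x j := by
    intro j
    have h := Finset.sum_erase_add Finset.univ (fun i => (T i j : ℂ) * x i) (Finset.mem_univ j)
    rw [heig j] at h
    linear_combination h
  have hr_nonneg : ∀ j, 0 ≤ ∑ i ∈ Finset.univ.erase j, T i j := by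
    intro j
    exact Finset.sum_nonneg fun i hi => hoff i j (Finset.ne_of_mem_erase hi)
  have hr_le : ∀ j, ∑ i ∈ Finset.univ.erase j, T i j ≤ -T j j := by
    intro j
    have h := Finset.sum_erase_add Finset.univ (fun i => T i j) (Finset.mem_univ j)
    have := hcol j
    linarith [h ▸ this]
  have hTjj : ∀ j, T j j ≤ 0 := fun j => by linarith [hr_nonneg j, hr_le j]
  have habs1 : ∀ j, ‖μ - (T j j : ℂ)‖ * a j ≤ ∑ i ∈ Finset.univ.erase j, T i j * a i := by
    intro j
    have h1 : ‖(μ - (T j j : ℂ)) * x j‖ ≤ ∑ i ∈ Finset.univ.erase j, T i j * a i := by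
      rw [← hsum1 j]
      refine (norm_sum_le _ _).trans (le_of_eq (Finset.sum_congr rfl fun i hi => ?_))
      rw [norm_mul, Complex.norm_real, Real.norm_eq_abs, abs_of_nonneg (hoff i j (Finset.ne_of_mem_erase hi))]
    simpa [norm_mul] using h1
  have habs2 : ∀ j, ∑ i ∈ Finset.univ.erase j, T i j * a i ≤ (∑ i ∈ Finset.univ.erase j, T i j) * m := by
    intro j
    rw [Finset.sum_mul]
    exact Finset.sum_le_sum fun i hi =>
      mul_le_mul_of_nonneg_left (hj₀max i (Finset.mem_univ i)) (hoff i j (Finset.ne_of_mem_erase hi))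
  have hμ : μ = 0 := by
    have hc : ‖μ - (T j₀ j₀ : ℂ)‖ * m ≤ (-T j₀ j₀) * m := by
      calc ‖μ - (T j₀ j₀ : ℂ)‖ * m ≤ ∑ i ∈ Finset.univ.erase j₀, T i j₀ * a i := habs1 j₀
        _ ≤ (∑ i ∈ Finset.univ.erase j₀, T i j₀) * m := habs2 j₀
        _ ≤ (-T j₀ j₀) * m := mul_le_mul_of_nonneg_right (hr_le j₀) (le_of_lt hmpos)
    have hc' : ‖μ - (T j₀ j₀ : ℂ)‖ ≤ -T j₀ j₀ := le_of_mul_le_mul_right hc hmpos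
    have hsq : (μ.re - T j₀ j₀)^2 + μ.im^2 ≤ (T j₀ j₀)^2 := by
      have h0 : (0:ℝ) ≤ ‖μ - (T j₀ j₀ : ℂ)‖ := norm_nonneg _
      have h1 : ‖μ - (T j₀ j₀ : ℂ)‖ ^ 2 = (μ.re - T j₀ j₀)^2 + μ.im^2 := by
        rw [Complex.sq_norm, Complex.normSq_apply]
        simp
        ring
      nlinarith [hc', h0]
    have h2 := hTjj j₀
    have hre0 : μ.re = 0 := by nlinarith [sq_nonneg μ.im]
    have him0 : μ.im = 0 := by nlinarith [sq_nonneg (μ.re - T j₀ j₀), sq_nonneg μ.im]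
    exact Complex.ext hre0 him0
  have key : ∀ j, a j = m → (∑ i, T i j = 0) ∧ ∀ i, i ≠ j → T i j ≠ 0 → a i = m := by
    intro j hjm
    have hlow : (-T j j) * m ≤ ∑ i ∈ Finset.univ.erase j, T i j * a i := by
      have := habs1 j
      rw [hμ, hjm] at this
      simpa [Complex.norm_real, Real.norm_eq_abs, abs_of_nonpos (hTjj j)] using this
    have hup := habs2 j
    have hrle := hr_le j
    have hrm : (∑ i ∈ Finset.univ.erase j, T i j) * m ≤ (-T j j) * m :=
      mul_le_mul_of_nonneg_right hrle (le_of_lt hmpos)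
    have heq1 : ∑ i ∈ Finset.univ.erase j, T i j * a i = (∑ i ∈ Finset.univ.erase j, T i j) * m :=
      le_antisymm hup (by linarith)
    have heq2 : (∑ i ∈ Finset.univ.erase j, T i j) = -T j j := by
      have : (∑ i ∈ Finset.univ.erase j, T i j) * m = (-T j j) * m := by linarith
      exact mul_right_cancel₀ (ne_of_gt hmpos) this
    constructor
    · have h := Finset.sum_erase_add Finset.univ (fun i => T i j) (Finset.mem_univ j)
      rw [heq2] at h
      linarith [h]
    · intro i hij hTij
      have hzero : ∑ i ∈ Finset.univ.erase j, T i j * (m - a i) = 0 := by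
        have hsplit : ∑ i ∈ Finset.univ.erase j, T i j * (m - a i)
            = (∑ i ∈ Finset.univ.erase j, T i j) * m - ∑ i ∈ Finset.univ.erase j, T i j * a i := by
          rw [Finset.sum_mul, ← Finset.sum_sub_distrib]
          exact Finset.sum_congr rfl fun k _ => by ring
        rw [hsplit, heq1]
        ring
      have := (Finset.sum_eq_zero_iff_of_nonneg (fun k hk =>
        mul_nonneg (hoff k j (Finset.ne_of_mem_erase hk))
          (by linarith [hj₀max k (Finset.mem_univ k)]))).mp hzero i
          (Finset.mem_erase.mpr ⟨hij, Finset.mem_univ i⟩)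
      have : m - a i = 0 := by
        rcases mul_eq_zero.mp this with h | h
        · exact absurd h hTij
        · exact h
      linarith
  have hall : ∀ j, a j = m := by
    by_contra hcon
    push_neg at hcon
    obtain ⟨j1, hj1⟩ := hcon
    apply hirr
    refine ⟨{i | a i ≠ m}, ⟨j1, hj1⟩, ⟨j₀, by simp [hm]⟩, ?_⟩
    intro i hi j hj
    simp only [Set.mem_setOf_eq, not_not] at hi hj
    by_contra hTij
    exact hi ((key j hj).2 i (fun h => hi (h ▸ hj)) hTij)
  obtain ⟨j, hj⟩ := hleak
  have := (key j (hall j)).1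
  linarith

/-- If `T` is an irreducible `n×n` matrix with nonnegative off-diagonal
entries, every column sum `≤ 0`, and some column sum strictly negative, then every
eigenvalue of `T` has strictly negative real part; in particular `T` is invertible. -/
theorem strictly_substochastic_irreducible_spectrum_neg (n : ℕ) (hn : 0 < n)
    (T : Matrix (Fin n) (Fin n) ℝ)
    (hoff : ∀ i j, i ≠ j → 0 ≤ T i j)
    (hcol : ∀ j, ∑ i, T i j ≤ 0)
    (hirr : MatIrreducible T)
    (hleak : ∃ j, ∑ i, T i j < 0) :
    (∀ μ ∈ spectrum ℂ (T.map (fun r => (r : ℂ))), μ.re < 0) ∧ IsUnit T.det := by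
  have hspec : ∀ μ ∈ spectrum ℂ (T.map (fun r => (r : ℂ))), μ.re < 0 := by
    intro μ hμ
    by_contra hc
    push_neg at hc
    obtain ⟨x, hx, heig⟩ := aux_left_eigvec n (T.map (fun r => (r : ℂ))) μ hμ
    exact aux_no_eig n hn T hoff hcol hirr hleak μ hc x hx
      (fun j => by simpa [Matrix.map_apply] using heig j)
  refine ⟨hspec, ?_⟩
  rw [isUnit_iff_ne_zero]
  intro hdet
  have hzero : (0 : ℂ) ∈ spectrum ℂ (T.map (fun r => (r : ℂ))) := by
    rw [spectrum.zero_mem_iff]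
    rw [Matrix.isUnit_iff_isUnit_det]
    have : (T.map (fun r => (r : ℂ))).det = ((T.det : ℂ)) :=
      (RingHom.map_det (algebraMap ℝ ℂ) T).symm
    rw [this, hdet]
    simp
  have := hspec 0 hzero
  simp at this
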